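/- For n ≥ 1, Σ_{T} Π_{v∈I(T)} ((h_v+1)x + 1 − h_v)/(2h_v) = (1/(n+1)) · binomial((n+1)x, n) as polynomials in x, where the sum is over all complete binary trees T with n internal vertices. -/

import Mathlib

open Polynomial

inductive PlaneTree : Type where
  | node : List PlaneTree → PlaneTree

namespace PlaneTree

/-- total number of vertices -/
def numVertices : PlaneTree → ℕ
  | node ts => 1 + (ts.attach.map (fun t => numVertices t.1)).sum
decreasing_by simp only [PlaneTree.node.sizeOf_spec]; exact Nat.lt_add_left 1 (List.sizeOf_lt_of_mem t.2)

/-- number of internal vertices (vertices with at least one child) -/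
def numInternal : PlaneTree → ℕ
  | node ts => (if ts.isEmpty then 0 else 1) + (ts.attach.map (fun t => numInternal t.1)).sum
decreasing_by simp only [PlaneTree.node.sizeOf_spec]; exact Nat.lt_add_left 1 (List.sizeOf_lt_of_mem t.2)

/-- product of `g h_v` over all internal vertices `v`, where `h_v` is the number of
internal vertices of the subtree rooted at `v` -/
def internalHookProd {α : Type} [CommMonoid α] (g : ℕ → α) : PlaneTree → α
  | node ts =>
    (if ts.isEmpty then 1 else g (numInternal (node ts))) *
      (ts.attach.map (fun t => internalHookProd g t.1)).prod
decreasing_by simp only [PlaneTree.node.sizeOf_spec]; exact Nat.lt_add_left 1 (List.sizeOf_lt_of_mem t.2)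

/-- product of `g h_v` over all vertices `v`, where `h_v` is the number of
vertices of the subtree rooted at `v` -/
def vertexHookProd {α : Type} [CommMonoid α] (g : ℕ → α) : PlaneTree → α
  | node ts =>
    g (numVertices (node ts)) * (ts.attach.map (fun t => vertexHookProd g t.1)).prod
decreasing_by simp only [PlaneTree.node.sizeOf_spec]; exact Nat.lt_add_left 1 (List.sizeOf_lt_of_mem t.2)

/-- every internal vertex has exactly `a` children -/
def IsFullAry (a : ℕ) : PlaneTree → Prop
  | node ts => (ts.length = 0 ∨ ts.length = a) ∧ ∀ t ∈ ts, IsFullAry a t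

/-- `IsKMAry k m b T`: with the root of `T` viewed as being on a level of parity `b`
(`b = false` meaning even), every vertex on an even level has `k` children and
every vertex on an odd level has `m` or `0` children. -/
def IsKMAry (k m : ℕ) : Bool → PlaneTree → Prop
  | b, node ts =>
    (if b then ts.length = m ∨ ts.length = 0 else ts.length = k) ∧
      ∀ t ∈ ts, IsKMAry k m (!b) t

/-- number of vertices on levels of parity `b`, the root having parity `cur` -/
def parityVertices (b cur : Bool) : PlaneTree → ℕ
  | node ts =>
    (if cur = b then 1 else 0) + (ts.attach.map (fun t => parityVertices b (!cur) t.1)).sum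
termination_by T => sizeOf T
decreasing_by simp only [PlaneTree.node.sizeOf_spec]; exact Nat.lt_add_left 1 (List.sizeOf_lt_of_mem t.2)

/-- number of internal vertices on levels of parity `b`, the root having parity `cur` -/
def parityInternal (b cur : Bool) : PlaneTree → ℕ
  | node ts =>
    (if cur = b ∧ ¬ts.isEmpty then 1 else 0) +
      (ts.attach.map (fun t => parityInternal b (!cur) t.1)).sum
termination_by T => sizeOf T
decreasing_by simp only [PlaneTree.node.sizeOf_spec]; exact Nat.lt_add_left 1 (List.sizeOf_lt_of_mem t.2)

/-- the order of a `(k,m)`-ary tree: the number of internal (crucial) vertices on odd levels -/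
def kmOrder (T : PlaneTree) : ℕ := parityInternal true false T

end PlaneTree

/-- the polynomial `binomial (a*x, n) = (ax)(ax-1)...(ax-n+1)/n!` -/
noncomputable def binomPoly (a n : ℕ) : Polynomial ℚ :=
  Polynomial.C (1 / (n.factorial : ℚ)) *
    ∏ i ∈ Finset.range n, (Polynomial.C (a : ℚ) * Polynomial.X - Polynomial.C (i : ℚ))

noncomputable section
namespace Lascoux

/-- generalized binomial coefficient over ℚ -/
def c (a : ℚ) (k : ℕ) : ℚ := (∏ i ∈ Finset.range k, (a - i)) / (k.factorial : ℚ)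

lemma c_zero (a : ℚ) : c a 0 = 1 := by simp [c]

lemma c_succ (a : ℚ) (k : ℕ) : c a (k+1) = c a k * (a - k) / (k+1) := by
  have hk : (k.factorial : ℚ) ≠ 0 := by positivity
  have hk1 : ((k:ℚ)+1) ≠ 0 := by positivity
  rw [c, c, Finset.prod_range_succ, Nat.factorial_succ]
  push_cast
  rw [div_mul_eq_mul_div, div_div, mul_comm ((k:ℚ)+1)]

lemma factprod (a : ℚ) (k : ℕ) :
    (∏ i ∈ Finset.range (k+1), (a - i)) = a * ∏ i ∈ Finset.range k, ((a-1) - i) := by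
  rw [Finset.prod_range_succ']
  simp only [Nat.cast_zero, sub_zero]
  rw [mul_comm]
  congr 1
  apply Finset.prod_congr rfl
  intro i _
  push_cast
  ring

/-- absorption: (k+1) * c a (k+1) = a * c (a-1) k -/
lemma c_absorb (a : ℚ) (k : ℕ) : (k+1 : ℚ) * c a (k+1) = a * c (a-1) k := by
  have hk : (k.factorial : ℚ) ≠ 0 := by positivity
  have hk1 : ((k:ℚ)+1) ≠ 0 := by positivity
  rw [c, c, factprod, Nat.factorial_succ]
  push_cast
  field_simp

/-- Pascal -/
lemma c_pascal (a : ℚ) (k : ℕ) : c a (k+1) = c (a-1) (k+1) + c (a-1) k := by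
  have h2 := c_succ (a-1) k
  have h3 := c_absorb a k
  have hk : (k:ℚ)+1 ≠ 0 := by positivity
  have h2' : ((k:ℚ)+1) * c (a-1) (k+1) = c (a-1) k * ((a-1) - k) := by
    rw [h2]; field_simp
  have : ((k:ℚ)+1) * c a (k+1) = ((k:ℚ)+1) * (c (a-1) (k+1) + c (a-1) k) := by
    rw [h3, mul_add, h2']; ring
  exact mul_left_cancel₀ hk this

end Lascoux

namespace Lascoux

/-- Gould polynomial value g_k(x;z) = x/(x+kz) * C(x+kz, k) in polynomial form -/
def g : ℕ → ℚ → ℚ → ℚ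
  | 0, _, _ => 1
  | (k+1), x, z => c (x+(k+1)*z) (k+1) - z * c (x+(k+1)*z - 1) k

lemma g_zero (x z : ℚ) : g 0 x z = 1 := rfl

lemma g_succ (k : ℕ) (x z : ℚ) : g (k+1) x z = c (x+(k+1)*z) (k+1) - z * c (x+(k+1)*z - 1) k := rfl

/-- Pascal for g -/
lemma g_pascal (k : ℕ) (x z : ℚ) : g (k+1) x z = g (k+1) (x-1) z + g k (x+z-1) z := by
  cases k with
  | zero =>
    simp only [g_succ, g_zero, c_zero]
    simp [c_succ, c_zero]
  | succ k =>
    rw [g_succ, g_succ, g_succ]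
    have p1 := c_pascal (x + ((k:ℚ)+1+1)*z) (k+1)
    have p2 := c_pascal (x + ((k:ℚ)+1+1)*z - 1) k
    push_cast
    ring_nf at p1 p2 ⊢
    linear_combination p1 - z * p2

end Lascoux

namespace Lascoux

lemma g_x_zero (k : ℕ) (z : ℚ) : g (k+1) 0 z = 0 := by
  have h := c_absorb ((k+1:ℕ)*z) k
  rw [g_succ]
  have hk : ((k:ℚ)+1) ≠ 0 := by positivity
  push_cast at h ⊢
  simp only [zero_add]
  have h2 : c (((k:ℚ)+1)*z) (k+1) = z * c (((k:ℚ)+1)*z - 1) k :=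
    mul_left_cancel₀ hk (by linear_combination h)
  linarith [h2]

lemma g_diag (k : ℕ) (x : ℚ) : g k x x = c ((k+1)*x) k / (k+1) := by
  cases k with
  | zero => simp [g_zero, c_zero]
  | succ k =>
    have h := c_absorb ((k+2:ℕ)*x) k
    rw [g_succ]
    have hk : ((k:ℚ)+1) ≠ 0 := by positivity
    have hk2 : ((k:ℚ)+2) ≠ 0 := by positivity
    push_cast at h ⊢
    rw [show ((k:ℚ)+1+1) = (k:ℚ)+2 by ring, show x + ((k:ℚ)+1)*x = ((k:ℚ)+2)*x by ring,
      eq_div_iff hk2]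
    linear_combination h

lemma g_two_diag (k : ℕ) (x : ℚ) : g k (2*x) x = 2 * c ((k+2)*x) k / (k+2) := by
  cases k with
  | zero => simp [g_zero, c_zero]
  | succ k =>
    have h := c_absorb ((k+3:ℕ)*x) k
    rw [g_succ]
    have hk : ((k:ℚ)+1) ≠ 0 := by positivity
    have hk3 : ((k:ℚ)+3) ≠ 0 := by positivity
    push_cast at h ⊢
    rw [show ((k:ℚ)+1+2) = (k:ℚ)+3 by ring, show 2*x + ((k:ℚ)+1)*x = ((k:ℚ)+3)*x by ring,
      eq_div_iff hk3]
    linear_combination h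

end Lascoux

namespace Lascoux
open Polynomial

def IsPolyFun (f : ℚ → ℚ) : Prop := ∃ p : Polynomial ℚ, ∀ t, f t = p.eval t

lemma IsPolyFun.congr {f h : ℚ → ℚ} (hf : ∀ t, f t = h t) (hh : IsPolyFun h) : IsPolyFun f := by
  obtain ⟨p, hp⟩ := hh; exact ⟨p, fun t => (hf t).trans (hp t)⟩

lemma IsPolyFun.const (a : ℚ) : IsPolyFun (fun _ => a) := ⟨C a, by simp⟩

lemma IsPolyFun.add {f h : ℚ → ℚ} (hf : IsPolyFun f) (hh : IsPolyFun h) :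
    IsPolyFun (fun t => f t + h t) := by
  obtain ⟨p, hp⟩ := hf; obtain ⟨q, hq⟩ := hh; exact ⟨p + q, by simp [hp, hq]⟩

lemma IsPolyFun.sub {f h : ℚ → ℚ} (hf : IsPolyFun f) (hh : IsPolyFun h) :
    IsPolyFun (fun t => f t - h t) := by
  obtain ⟨p, hp⟩ := hf; obtain ⟨q, hq⟩ := hh; exact ⟨p - q, by simp [hp, hq]⟩

lemma IsPolyFun.mul {f h : ℚ → ℚ} (hf : IsPolyFun f) (hh : IsPolyFun h) :
    IsPolyFun (fun t => f t * h t) := by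
  obtain ⟨p, hp⟩ := hf; obtain ⟨q, hq⟩ := hh; exact ⟨p * q, by simp [hp, hq]⟩

lemma IsPolyFun.sum {ι : Type*} (s : Finset ι) (f : ι → ℚ → ℚ)
    (hf : ∀ i ∈ s, IsPolyFun (f i)) : IsPolyFun (fun t => ∑ i ∈ s, f i t) := by
  classical
  induction s using Finset.induction with
  | empty => exact IsPolyFun.congr (fun t => by simp) (IsPolyFun.const 0)
  | @insert a s ha ih =>
    refine IsPolyFun.congr (fun t => Finset.sum_insert ha) ?_
    exact IsPolyFun.add (hf a (Finset.mem_insert_self a s))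
      (ih fun i hi => hf i (Finset.mem_insert_of_mem hi))

lemma isPolyFun_c (b : ℚ) (k : ℕ) : IsPolyFun (fun t => c (t + b) k) := by
  refine ⟨C ((k.factorial : ℚ)⁻¹) * ∏ i ∈ Finset.range k, (X + C (b - i)), fun t => ?_⟩
  simp only [c]
  rw [div_eq_mul_inv, mul_comm]
  simp only [eval_mul, eval_C, eval_prod, eval_add, eval_X]
  congr 1
  exact Finset.prod_congr rfl fun i _ => by ring

lemma eq_of_periodic {f : ℚ → ℚ} (hf : IsPolyFun f) (hper : ∀ t, f t = f (t-1)) (t : ℚ) :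
    f t = f 0 := by
  obtain ⟨p, hp⟩ := hf
  have key : ∀ m : ℕ, f m = f 0 := by
    intro m
    induction m with
    | zero => norm_num
    | succ m ih =>
      have h := hper ((m:ℚ)+1)
      rw [show ((m:ℚ)+1) - 1 = (m:ℚ) by ring] at h
      push_cast
      rw [h, ih]
  have hq : p - C (f 0) = 0 := by
    apply Polynomial.eq_zero_of_infinite_isRoot
    apply Set.infinite_of_injective_forall_mem (f := fun m : ℕ => (m:ℚ))
    · exact Nat.cast_injective
    · intro m
      simp only [Set.mem_setOf_eq, IsRoot, eval_sub, eval_C, ← hp, key m, sub_self]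
  have hpc : p = C (f 0) := by rwa [sub_eq_zero] at hq
  rw [hp t, hpc, hp 0, hpc]
  simp

end Lascoux

namespace Lascoux

def S (n : ℕ) (x z y : ℚ) : ℚ :=
  ∑ k ∈ Finset.range (n+1), g k x z * c (y + ((n-k : ℕ) : ℚ)*z) (n-k)

lemma S_zero (x z y : ℚ) : S 0 x z y = 1 := by
  simp [S, g_zero, c_zero]

lemma S_succ_y (n : ℕ) (x z y : ℚ) :
    S (n+1) x z y = S (n+1) x z (y-1) + S n x z (y+z-1) := by
  unfold S
  rw [Finset.sum_range_succ, Finset.sum_range_succ (n := n+1)]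
  have htop : (n+1) - (n+1) = 0 := by omega
  rw [htop]
  simp only [c_zero, Nat.cast_zero, zero_mul]
  rw [add_right_comm, ← Finset.sum_add_distrib]
  congr 1
  apply Finset.sum_congr rfl
  intro k hk
  have hk' : k ≤ n := by simpa [Nat.lt_succ_iff] using hk
  have h1 : n + 1 - k = (n - k) + 1 := by omega
  rw [h1]
  have hp := c_pascal (y + (((n-k:ℕ)+1 : ℕ) : ℚ)*z) (n-k)
  push_cast at hp ⊢
  rw [show y + ((n-k:ℕ)+1:ℚ)*z - 1 = (y - 1) + ((n-k:ℕ)+1:ℚ)*z by ring] at hp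
  rw [hp]
  ring_nf

end Lascoux

namespace Lascoux

lemma S_succ_x (n : ℕ) (x z y : ℚ) :
    S (n+1) x z y = S (n+1) (x-1) z y + S n (x+z-1) z y := by
  unfold S
  rw [Finset.sum_range_succ' _ (n+1), Finset.sum_range_succ' (fun k => g k (x-1) z * c (y + ((n+1-k : ℕ) : ℚ)*z) (n+1-k)) (n+1)]
  simp only [Nat.succ_sub_succ, Nat.sub_zero, g_zero, one_mul]
  rw [add_right_comm, ← Finset.sum_add_distrib]
  congr 1
  apply Finset.sum_congr rfl
  intro k _
  rw [g_pascal]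
  ring

lemma isPolyFun_g (k : ℕ) (z : ℚ) : IsPolyFun (fun x => g k x z) := by
  cases k with
  | zero => exact IsPolyFun.congr (fun t => g_zero t z) (IsPolyFun.const 1)
  | succ k =>
    refine IsPolyFun.congr (fun t => g_succ k t z) ?_
    refine IsPolyFun.sub ?_ (IsPolyFun.mul (IsPolyFun.const z) ?_)
    · exact IsPolyFun.congr (fun t => by push_cast; ring_nf) (isPolyFun_c (((k:ℚ)+1)*z) (k+1))
    · refine IsPolyFun.congr (fun t => ?_) (isPolyFun_c (((k:ℚ)+1)*z - 1) k)
      rw [show t + ((k:ℚ)+1)*z - 1 = t + (((k:ℚ)+1)*z - 1) by ring]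

lemma isPolyFun_S_y (n : ℕ) (x z : ℚ) : IsPolyFun (fun y => S n x z y) := by
  refine IsPolyFun.congr (fun t => rfl) (IsPolyFun.sum (Finset.range (n+1)) _ ?_)
  intro k _
  exact IsPolyFun.mul (IsPolyFun.const (g k x z)) (isPolyFun_c (((n-k:ℕ):ℚ)*z) (n-k))

lemma isPolyFun_S_x (n : ℕ) (z y : ℚ) : IsPolyFun (fun x => S n x z y) := by
  refine IsPolyFun.congr (fun t => rfl) (IsPolyFun.sum (Finset.range (n+1)) _ ?_)
  intro k _
  exact IsPolyFun.mul (isPolyFun_g k z) (IsPolyFun.const (c (y + ((n-k:ℕ):ℚ)*z) (n-k)))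

theorem S_eq (n : ℕ) : ∀ (x z y : ℚ), S n x z y = c (x+y+n*z) n := by
  induction n with
  | zero => intro x z y; rw [S_zero, c_zero]
  | succ n ih =>
    intro x₀ z y₀
    have step1 : ∀ x y : ℚ, S (n+1) x z y - c (x+y+((n+1:ℕ):ℚ)*z) (n+1)
        = S (n+1) x z 0 - c (x+0+((n+1:ℕ):ℚ)*z) (n+1) := by
      intro x y
      have hpoly : IsPolyFun (fun t => S (n+1) x z t - c (x+t+((n+1:ℕ):ℚ)*z) (n+1)) := by
        refine IsPolyFun.sub (isPolyFun_S_y (n+1) x z) ?_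
        refine IsPolyFun.congr (fun t => ?_) (isPolyFun_c (x+((n+1:ℕ):ℚ)*z) (n+1))
        rw [show x+t+((n+1:ℕ):ℚ)*z = t + (x+((n+1:ℕ):ℚ)*z) by ring]
      have hper : ∀ t : ℚ, (S (n+1) x z t - c (x+t+((n+1:ℕ):ℚ)*z) (n+1))
          = (S (n+1) x z (t-1) - c (x+(t-1)+((n+1:ℕ):ℚ)*z) (n+1)) := by
        intro t
        rw [S_succ_y]
        have hc := c_pascal (x+t+((n+1:ℕ):ℚ)*z) n
        have hih := ih x z (t+z-1)
        rw [show x+t+((n+1:ℕ):ℚ)*z - 1 = x + (t+z-1) + (n:ℚ)*z by push_cast; ring] at hc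
        rw [show x+(t-1)+((n+1:ℕ):ℚ)*z = x+t+((n+1:ℕ):ℚ)*z - 1 by ring]
        rw [hc, hih]
        push_cast
        ring_nf
      exact eq_of_periodic hpoly hper y
    have step2 : ∀ x : ℚ, S (n+1) x z 0 - c (x+0+((n+1:ℕ):ℚ)*z) (n+1)
        = S (n+1) 0 z 0 - c ((0:ℚ)+0+((n+1:ℕ):ℚ)*z) (n+1) := by
      intro x
      have hpoly : IsPolyFun (fun t => S (n+1) t z 0 - c (t+0+((n+1:ℕ):ℚ)*z) (n+1)) := by
        refine IsPolyFun.sub (isPolyFun_S_x (n+1) z 0) ?_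
        refine IsPolyFun.congr (fun t => ?_) (isPolyFun_c ((0:ℚ)+((n+1:ℕ):ℚ)*z) (n+1))
        rw [show t+0+((n+1:ℕ):ℚ)*z = t + ((0:ℚ)+((n+1:ℕ):ℚ)*z) by ring]
      have hper : ∀ t : ℚ, (S (n+1) t z 0 - c (t+0+((n+1:ℕ):ℚ)*z) (n+1))
          = (S (n+1) (t-1) z 0 - c ((t-1)+0+((n+1:ℕ):ℚ)*z) (n+1)) := by
        intro t
        rw [S_succ_x]
        have hc := c_pascal (t+0+((n+1:ℕ):ℚ)*z) n
        have hih := ih (t+z-1) z 0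
        rw [show t+0+((n+1:ℕ):ℚ)*z - 1 = (t+z-1) + 0 + (n:ℚ)*z by push_cast; ring] at hc
        rw [show (t-1)+0+((n+1:ℕ):ℚ)*z = t+0+((n+1:ℕ):ℚ)*z - 1 by ring]
        rw [hc, hih]
        push_cast
        ring_nf
      exact eq_of_periodic hpoly hper x
    have base : S (n+1) 0 z 0 = c ((0:ℚ)+0+((n+1:ℕ):ℚ)*z) (n+1) := by
      unfold S
      rw [Finset.sum_range_succ']
      simp only [g_x_zero, zero_mul, Finset.sum_const_zero, zero_add, g_zero, one_mul,
        Nat.sub_zero]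
    have h1 := step1 x₀ y₀
    have h2 := step2 x₀
    push_cast at h1 h2 base ⊢
    linarith

end Lascoux
namespace Lascoux

theorem rothe (n : ℕ) (x y z : ℚ) :
    (∑ k ∈ Finset.range (n+1), g k x z * g (n-k) y z) = g n (x+y) z := by
  cases n with
  | zero => simp [g_zero]
  | succ n =>
    have h1 := S_eq (n+1) x z y
    have h2 := S_eq n x z (y+z-1)
    rw [g_succ]
    rw [show x+y+((n:ℚ)+1)*z = x+y+((n+1:ℕ):ℚ)*z by push_cast; ring]
    rw [show x+y+((n+1:ℕ):ℚ)*z - 1 = x+(y+z-1)+(n:ℚ)*z by push_cast; ring]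
    rw [← h1, ← h2]
    unfold S
    rw [Finset.sum_range_succ (n := n+1), Finset.sum_range_succ (n := n+1)]
    have htop : (n+1) - (n+1) = 0 := by omega
    rw [htop]
    simp only [Nat.cast_zero, zero_mul, add_zero, c_zero, g_zero, mul_one]
    rw [Finset.mul_sum]
    have key : ∀ k ∈ Finset.range (n+1), g k x z * g (n+1-k) y z
        = g k x z * c (y + ((n+1-k:ℕ):ℚ)*z) (n+1-k) - z * (g k x z * c (y+z-1+((n-k:ℕ):ℚ)*z) (n-k)) := by
      intro k hk
      have hk' : k ≤ n := by simpa [Nat.lt_succ_iff] using hk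
      have h3 : n + 1 - k = (n - k) + 1 := by omega
      rw [h3, g_succ]
      push_cast
      rw [show y+z-1 + ((n-k:ℕ):ℚ)*z = y + (((n-k:ℕ):ℚ)+1)*z - 1 by ring]
      ring
    rw [Finset.sum_congr rfl key, Finset.sum_sub_distrib]
    ring
end Lascoux

namespace Lascoux

theorem conv (m : ℕ) (x : ℚ) :
    ∑ k ∈ Finset.range (m+1),
      (c (((k:ℚ)+1)*x) k / ((k:ℚ)+1)) * (c ((((m-k:ℕ):ℚ)+1)*x) (m-k) / (((m-k:ℕ):ℚ)+1))
      = 2 * c (((m:ℚ)+2)*x) m / ((m:ℚ)+2) := by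
  have h := rothe m x x x
  rw [show x + x = 2*x by ring] at h
  rw [g_two_diag] at h
  rw [← h]
  apply Finset.sum_congr rfl
  intro k hk
  rw [g_diag, g_diag]

end Lascoux

namespace PlaneTree

lemma numInternal_node (ts : List PlaneTree) :
    (node ts).numInternal = (if ts.isEmpty then 0 else 1) + (ts.map numInternal).sum := by
  rw [numInternal]
  congr 1
  rw [List.attach_map_val]

lemma internalHookProd_node {α : Type} [CommMonoid α] (g : ℕ → α) (ts : List PlaneTree) :
    internalHookProd g (node ts) =
      (if ts.isEmpty then 1 else g (numInternal (node ts))) * (ts.map (internalHookProd g)).prod := by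
  rw [internalHookProd]
  congr 1
  rw [List.attach_map_val]

lemma numInternal_nil : (node []).numInternal = 0 := by simp [numInternal_node]

lemma numInternal_pair (L R : PlaneTree) :
    (node [L, R]).numInternal = 1 + L.numInternal + R.numInternal := by
  rw [numInternal_node]; simp [add_assoc]

lemma internalHookProd_nil {α : Type} [CommMonoid α] (g : ℕ → α) :
    internalHookProd g (node []) = 1 := by simp [internalHookProd_node]

lemma internalHookProd_pair {α : Type} [CommMonoid α] (g : ℕ → α) (L R : PlaneTree) :
    internalHookProd g (node [L, R]) =
      g (1 + L.numInternal + R.numInternal) * (internalHookProd g L * internalHookProd g R) := by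
  rw [internalHookProd_node]
  simp [numInternal_pair, mul_assoc]

lemma isFullAry_node (ts : List PlaneTree) :
    IsFullAry 2 (node ts) ↔ (ts.length = 0 ∨ ts.length = 2) ∧ ∀ t ∈ ts, IsFullAry 2 t := by
  rw [IsFullAry]

lemma isFullAry_nil : IsFullAry 2 (node []) := by
  rw [isFullAry_node]
  refine ⟨Or.inl rfl, ?_⟩
  intro t ht; simp at ht

lemma isFullAry_pair_iff (L R : PlaneTree) :
    IsFullAry 2 (node [L, R]) ↔ IsFullAry 2 L ∧ IsFullAry 2 R := by
  rw [isFullAry_node]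
  simp

lemma eq_nil_of_full (T : PlaneTree) (hT : IsFullAry 2 T) (h0 : T.numInternal = 0) :
    T = node [] := by
  obtain ⟨ts⟩ := T
  rw [isFullAry_node] at hT
  obtain ⟨hlen, -⟩ := hT
  rcases hlen with h | h
  · rw [List.length_eq_zero_iff] at h; rw [h]
  · exfalso
    rw [numInternal_node] at h0
    have : ¬ ts.isEmpty := by
      cases ts with
      | nil => simp at h
      | cons a l => simp
    rw [if_neg this] at h0
    omega

lemma exists_pair_of_full (T : PlaneTree) (hT : IsFullAry 2 T) (h0 : T.numInternal ≠ 0) :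
    ∃ L R, T = node [L, R] := by
  obtain ⟨ts⟩ := T
  rw [isFullAry_node] at hT
  obtain ⟨hlen, -⟩ := hT
  rcases hlen with h | h
  · exfalso
    rw [List.length_eq_zero_iff] at h
    subst h
    exact h0 numInternal_nil
  · obtain ⟨L, R, rfl⟩ := List.length_eq_two.mp h
    exact ⟨L, R, rfl⟩

end PlaneTree

namespace Lascoux2
open PlaneTree

def Tn (n : ℕ) : Type := {T : PlaneTree // IsFullAry 2 T ∧ T.numInternal = n}

def Phi (n : ℕ) (p : Σ i : Fin (n+1), Tn i.1 × Tn (n - i.1)) : Tn (n+1) := by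
  refine ⟨node [p.2.1.1, p.2.2.1], ?_, ?_⟩
  · rw [isFullAry_pair_iff]
    exact ⟨p.2.1.2.1, p.2.2.2.1⟩
  · rw [numInternal_pair, p.2.1.2.2, p.2.2.2.2]
    have := p.1.2
    omega

lemma Phi_bij (n : ℕ) : Function.Bijective (Phi n) := by
  constructor
  · rintro ⟨i, ⟨L, hL⟩, ⟨R, hR⟩⟩ ⟨j, ⟨L', hL'⟩, ⟨R', hR'⟩⟩ h
    have hnode : node [L, R] = node [L', R'] := congrArg Subtype.val h
    have hLL : L = L' ∧ R = R' := by
      injection hnode with h1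
      injection h1 with h2 h3
      injection h3 with h4 h5
      exact ⟨h2, h4⟩
    obtain ⟨rfl, rfl⟩ := hLL
    have hij : i = j := by
      apply Fin.ext
      rw [← hL.2, ← hL'.2]
    subst hij
    rfl
  · rintro ⟨T, hT, hn⟩
    obtain ⟨L, R, rfl⟩ := exists_pair_of_full T hT (by omega)
    rw [isFullAry_pair_iff] at hT
    rw [numInternal_pair] at hn
    have hLle : L.numInternal ≤ n := by omega
    refine ⟨⟨⟨L.numInternal, by omega⟩, ⟨L, hT.1, rfl⟩, ⟨R, hT.2, show R.numInternal = n - L.numInternal by omega⟩⟩, ?_⟩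
    rfl

noncomputable def eqv (n : ℕ) : (Σ i : Fin (n+1), Tn i.1 × Tn (n - i.1)) ≃ Tn (n+1) :=
  Equiv.ofBijective (Phi n) (Phi_bij n)

instance instSubT0 : Subsingleton (Tn 0) := by
  constructor
  rintro ⟨T, hT, h0⟩ ⟨T', hT', h0'⟩
  apply Subtype.ext
  show T = T'
  rw [eq_nil_of_full T hT h0, eq_nil_of_full T' hT' h0']

lemma finite_Tn (n : ℕ) : Finite (Tn n) := by
  induction n using Nat.strong_induction_on with
  | _ n ih =>
    match n with
    | 0 => exact Finite.of_subsingleton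
    | (n+1) =>
      haveI : ∀ i : Fin (n+1), Finite (Tn i.1) := fun i => ih i.1 (by omega)
      haveI : ∀ i : Fin (n+1), Finite (Tn (n - i.1)) := fun i => ih (n - i.1) (by omega)
      exact Finite.of_equiv _ (eqv n)

instance (n : ℕ) : Finite (Tn n) := finite_Tn n

end Lascoux2

namespace Lascoux2
open PlaneTree

noncomputable def A {R : Type} [CommSemiring R] (g : ℕ → R) (n : ℕ) : R :=
  ∑ᶠ T : Tn n, internalHookProd g T.1

lemma A_zero {R : Type} [CommSemiring R] (g : ℕ → R) : A g 0 = 1 := by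
  letI : Unique (Tn 0) :=
    ⟨⟨⟨node [], isFullAry_nil, numInternal_nil⟩⟩, fun a => Subsingleton.elim _ _⟩
  rw [A, finsum_unique]
  show internalHookProd g (node []) = 1
  exact internalHookProd_nil g

lemma A_succ {R : Type} [CommSemiring R] (g : ℕ → R) (n : ℕ) :
    A g (n+1) = g (n+1) * ∑ i ∈ Finset.range (n+1), A g i * A g (n-i) := by
  classical
  letI : ∀ m : ℕ, Fintype (Tn m) := fun m => Fintype.ofFinite _
  rw [A, finsum_eq_sum_of_fintype, ← Equiv.sum_comp (eqv n) (fun T => internalHookProd g T.1)]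
  have hterm : ∀ p : Σ i : Fin (n+1), Tn i.1 × Tn (n - i.1),
      internalHookProd g ((eqv n p).1)
        = g (n+1) * (internalHookProd g p.2.1.1 * internalHookProd g p.2.2.1) := by
    rintro ⟨i, L, R⟩
    show internalHookProd g (node [L.1, R.1]) = _
    rw [internalHookProd_pair, L.2.2, R.2.2]
    congr 2
    have := i.2
    omega
  rw [Finset.sum_congr rfl (fun p _ => hterm p), ← Finset.mul_sum]
  congr 1
  rw [← Finset.univ_sigma_univ, Finset.sum_sigma]
  have hinner : ∀ i : Fin (n+1),
      (∑ p ∈ (Finset.univ : Finset (Tn i.1 × Tn (n - i.1))),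
        internalHookProd g p.1.1 * internalHookProd g p.2.1)
      = A g i.1 * A g (n - i.1) := by
    intro i
    rw [A, A, finsum_eq_sum_of_fintype, finsum_eq_sum_of_fintype, Finset.sum_mul_sum]
    rw [Fintype.sum_prod_type]
  rw [Finset.sum_congr rfl (fun i _ => hinner i)]
  exact Fin.sum_univ_eq_sum_range (fun i => A g i * A g (n - i)) (n+1)

end Lascoux2


namespace Lascoux2
open Polynomial Lascoux

noncomputable def gpoly : ℕ → Polynomial ℚ :=
  fun h => (Polynomial.C ((h + 1 : ℕ) : ℚ) * Polynomial.X + Polynomial.C (1 - (h : ℚ))) *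
    Polynomial.C (1 / ((2 * h : ℕ) : ℚ))

noncomputable def B (n : ℕ) : Polynomial ℚ :=
  Polynomial.C (1 / ((n + 1 : ℕ) : ℚ)) * binomPoly (n + 1) n

lemma B_zero : B 0 = 1 := by
  simp [B, binomPoly]

lemma binomPoly_eval (a n : ℕ) (x : ℚ) : (binomPoly a n).eval x = c ((a:ℚ)*x) n := by
  simp only [binomPoly, eval_mul, eval_C, eval_prod, eval_sub, eval_X]
  rw [c, div_eq_mul_inv]
  ring

lemma B_eval (n : ℕ) (x : ℚ) : (B n).eval x = c (((n:ℚ)+1)*x) n / ((n:ℚ)+1) := by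
  rw [B, eval_mul, eval_C, binomPoly_eval]
  push_cast
  rw [div_eq_mul_inv]
  ring

lemma conv_poly (m : ℕ) :
    ∑ i ∈ Finset.range (m+1), B i * B (m-i)
      = Polynomial.C (2/((m:ℚ)+2)) * binomPoly (m+2) m := by
  apply Polynomial.funext
  intro x
  have h := Lascoux.conv m x
  rw [eval_finset_sum]
  have hterm : ∀ i ∈ Finset.range (m+1), (B i * B (m-i)).eval x
      = (c (((i:ℚ)+1)*x) i / ((i:ℚ)+1)) * (c ((((m-i:ℕ):ℚ)+1)*x) (m-i) / (((m-i:ℕ):ℚ)+1)) := by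
    intro i _
    rw [eval_mul, B_eval, B_eval]
  rw [Finset.sum_congr rfl hterm, h, eval_mul, eval_C, binomPoly_eval]
  push_cast
  ring

lemma gB (n : ℕ) :
    gpoly (n+1) * (Polynomial.C (2/((n:ℚ)+2)) * binomPoly (n+2) n) = B (n+1) := by
  apply Polynomial.funext
  intro x
  rw [eval_mul, B_eval, eval_mul, eval_C, binomPoly_eval]
  rw [gpoly]
  simp only [eval_mul, eval_add, eval_C, eval_X]
  have hc := c_succ (((n:ℚ)+2)*x) n
  have h1 : ((n:ℚ)+1) ≠ 0 := by positivity
  have h2 : ((n:ℚ)+2) ≠ 0 := by positivity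
  push_cast
  rw [show ((n:ℚ)+1+1) = (n:ℚ)+2 by ring] at *
  rw [hc]
  field_simp
  ring

lemma A_eq_B : ∀ n : ℕ, A gpoly n = B n := by
  intro n
  induction n using Nat.strong_induction_on with
  | _ n ih =>
    match n with
    | 0 => rw [A_zero, B_zero]
    | (n+1) =>
      rw [A_succ]
      have hs : ∀ i ∈ Finset.range (n+1), A gpoly i * A gpoly (n-i) = B i * B (n-i) := by
        intro i hi
        rw [ih i (by simp at hi; omega), ih (n-i) (by omega)]
      rw [Finset.sum_congr rfl hs, conv_poly, ← gB n]

end Lascoux2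

/-- Lascoux's identity: `Σ_T Π_{v∈I(T)} ((h_v+1)x + 1 - h_v)/(2h_v) = (1/(n+1))·binom((n+1)x, n)`,
summed over all complete binary trees `T` with `n` internal vertices. -/
theorem lascoux_identity (n : ℕ) (hn : 1 ≤ n) :
    (∑ᶠ T : {T : PlaneTree // PlaneTree.IsFullAry 2 T ∧ PlaneTree.numInternal T = n},
        PlaneTree.internalHookProd
          (fun h => (Polynomial.C ((h + 1 : ℕ) : ℚ) * Polynomial.X + Polynomial.C (1 - (h : ℚ))) *
            Polynomial.C (1 / ((2 * h : ℕ) : ℚ))) T.1)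
      = Polynomial.C (1 / ((n + 1 : ℕ) : ℚ)) * binomPoly (n + 1) n := by
  have h := Lascoux2.A_eq_B n
  rw [Lascoux2.A, Lascoux2.B] at h
  exact h
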